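/- Let A be a von Neumann algebra (or take A = B(H)), P its lattice of orthogonal projections, a ∈ A, and p ∈ P. Then the set Q = {q ∈ P : pa = qa} is a complete sublattice of P; in particular Q is closed under arbitrary infima and suprema taken in P. -/

import Mathlib

open ContinuousLinearMap Submodule

section helpers
variable {H : Type*} [NormedAddCommGroup H] [InnerProductSpace ℝ H] [CompleteSpace H]

noncomputable def projL (K : Submodule ℝ H) [CompleteSpace K] : H →L[ℝ] H :=
  K.subtypeL ∘L orthogonalProjection K

omit [CompleteSpace H] in
lemma projL_apply (K : Submodule ℝ H) [CompleteSpace K] (x : H) :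
    projL K x = (orthogonalProjection K x : H) := rfl

lemma projL_eq_self {K : Submodule ℝ H} [CompleteSpace K] {x : H} (hx : x ∈ K) :
    projL K x = x := by
  rw [projL_apply]
  exact eq_starProjection_of_mem_orthogonal hx (by simp)

lemma projL_eq_zero {K : Submodule ℝ H} [CompleteSpace K] {x : H} (hx : x ∈ Kᗮ) :
    projL K x = 0 := by
  rw [projL_apply]
  exact eq_starProjection_of_mem_orthogonal K.zero_mem (by simpa)

lemma projL_selfAdjoint (K : Submodule ℝ H) [CompleteSpace K] : IsSelfAdjoint (projL K) :=
  isSelfAdjoint_starProjection K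

lemma projL_idem (K : Submodule ℝ H) [CompleteSpace K] : projL K * projL K = projL K := by
  ext x
  exact projL_eq_self (coe_mem _)

lemma projL_comp {U V : Submodule ℝ H} [CompleteSpace U] [CompleteSpace V] (h : U ≤ V) :
    projL U = projL U * projL V := by
  ext x
  have h1 : x - projL V x ∈ Uᗮ :=
    Submodule.orthogonal_le h (sub_starProjection_mem_orthogonal x)
  have := projL_eq_zero h1
  rw [map_sub, sub_eq_zero] at this
  simpa [mul_apply] using this

-- selfadjoint idempotent helpers
lemma sa_sub_mem {q : H →L[ℝ] H} (h1 : IsSelfAdjoint q) (h2 : q * q = q) (x : H) :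
    x - q x ∈ ((1 - q).ker)ᗮ := by
  intro y hy
  have hy' : y = q y := by
    have : (1 - q) y = 0 := hy
    rw [ContinuousLinearMap.sub_apply, ContinuousLinearMap.one_apply, sub_eq_zero] at this
    exact this
  rw [real_inner_comm]
  calc inner ℝ (x - q x) y = inner ℝ (x - q x) (q y) := by rw [← hy']
    _ = inner ℝ (ContinuousLinearMap.adjoint q (x - q x)) y := (adjoint_inner_left q _ _).symm
    _ = inner ℝ (q (x - q x)) y := by rw [h1.adjoint_eq]
    _ = (0:ℝ) := by
        have : q (x - q x) = 0 := by
          have := congrFun (congrArg DFunLike.coe h2) x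
          simp only [mul_apply_eq_comp] at this
          simp [map_sub, this]
        simp [this]

lemma sa_apply_mem {q : H →L[ℝ] H} (h2 : q * q = q) (x : H) :
    q x ∈ (1 - q).ker := by
  have := congrFun (congrArg DFunLike.coe h2) x
  simp only [mul_apply_eq_comp] at this
  simp [LinearMap.mem_ker, sub_eq_zero, this]

lemma sa_eq_projL {q : H →L[ℝ] H} (h1 : IsSelfAdjoint q) (h2 : q * q = q) :
    haveI : CompleteSpace ((1 - q).ker) :=
      (isClosed_ker (1 - q)).completeSpace_coe
    q = projL ((1 - q).ker) := by
  haveI : CompleteSpace ((1 - q).ker) := (isClosed_ker (1 - q)).completeSpace_coe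
  ext x
  rw [projL_apply]
  exact (eq_starProjection_of_mem_orthogonal (sa_apply_mem h2 x) (sa_sub_mem h1 h2 x)).symm

end helpers

section main
variable {H : Type*} [NormedAddCommGroup H] [InnerProductSpace ℝ H] [CompleteSpace H]

omit [CompleteSpace H] in
lemma mem_ker_one_sub {q : H →L[ℝ] H} {x : H} : x ∈ (1 - q).ker ↔ q x = x := by
  rw [LinearMap.mem_ker, ContinuousLinearMap.coe_coe, ContinuousLinearMap.sub_apply, ContinuousLinearMap.one_apply, sub_eq_zero]
  exact eq_comm

instance kerCS (f : H →L[ℝ] H) : CompleteSpace (f.ker) :=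
  (isClosed_ker f).completeSpace_coe

set_option synthInstance.maxHeartbeats 1000000 in
lemma closure_orth (X : Submodule ℝ H) : X.topologicalClosureᗮ = Xᗮ := by
  haveI : CompleteSpace Xᗮ := X.isClosed_orthogonal.completeSpace_coe
  rw [← X.orthogonal_orthogonal_eq_closure]
  exact Xᗮ.orthogonal_orthogonal

lemma star_flip {s q : H →L[ℝ] H} (hs : IsSelfAdjoint s) (hq : IsSelfAdjoint q)
    (h : s = s * q) : s = q * s := by
  have := congrArg star h
  rwa [star_mul, hs.star_eq, hq.star_eq] at this

end main

theorem stmt_4 {H : Type*} [NormedAddCommGroup H] [InnerProductSpace ℝ H] [CompleteSpace H]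
    (a p : H →L[ℝ] H) (hp : IsSelfAdjoint p ∧ p * p = p)
    (R : Set (H →L[ℝ] H)) (hRne : R.Nonempty)
    (hR : ∀ q ∈ R, (IsSelfAdjoint q ∧ q * q = q) ∧ p * a = q * a) :
    (∃ r : H →L[ℝ] H, (IsSelfAdjoint r ∧ r * r = r) ∧ p * a = r * a ∧
      (∀ q ∈ R, r = r * q) ∧
      ∀ s : H →L[ℝ] H, IsSelfAdjoint s → s * s = s → (∀ q ∈ R, s = s * q) → s = s * r) ∧
    (∃ r : H →L[ℝ] H, (IsSelfAdjoint r ∧ r * r = r) ∧ p * a = r * a ∧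
      (∀ q ∈ R, q = q * r) ∧
      ∀ s : H →L[ℝ] H, IsSelfAdjoint s → s * s = s → (∀ q ∈ R, q = q * s) → r = r * s) := by
  obtain ⟨q0, hq0⟩ := hRne
  have hq : ∀ q : R, IsSelfAdjoint (q : H →L[ℝ] H) ∧ (q : H →L[ℝ] H) * q = q :=
    fun q => (hR q q.2).1
  have hpa : ∀ q : R, ∀ x, p (a x) = (q : H →L[ℝ] H) (a x) := by
    intro q x
    have := congrFun (congrArg DFunLike.coe (hR q q.2).2) x
    simpa [mul_apply] using this
  constructor
  · -- infimum
    set K : Submodule ℝ H := ⨅ q : R, (1 - (q : H →L[ℝ] H)).ker with hK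
    have hKc : IsClosed (K : Set H) := by
      have : (K : Set H) = ⋂ q : R, ((1 - (q : H →L[ℝ] H)).ker : Set H) := by
        rw [hK]; exact Submodule.coe_iInf _
      rw [this]
      exact isClosed_iInter fun q => isClosed_ker _
    haveI : CompleteSpace K := hKc.completeSpace_coe
    refine ⟨projL K, ⟨projL_selfAdjoint K, projL_idem K⟩, ?_, ?_, ?_⟩
    · ext x
      have hmem : p (a x) ∈ K := by
        rw [hK, Submodule.mem_iInf]
        intro q
        rw [hpa q x]
        exact sa_apply_mem (hq q).2 (a x)
      have horth : a x - p (a x) ∈ Kᗮ := by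
        refine Submodule.orthogonal_le (iInf_le _ (⟨q0, hq0⟩ : R)) ?_
        rw [hpa ⟨q0, hq0⟩ x]
        exact sa_sub_mem (hq _).1 (hq _).2 (a x)
      simp only [mul_apply_eq_comp]
      rw [projL_apply]
      exact (eq_starProjection_of_mem_orthogonal hmem horth).symm
    · intro q hqR
      rw [sa_eq_projL ((hR q hqR).1.1) ((hR q hqR).1.2)]
      exact projL_comp (iInf_le _ (⟨q, hqR⟩ : R))
    · intro s hs1 hs2 hsq
      have hle : (1 - s).ker ≤ K := by
        intro y hy
        have hy' : s y = y := mem_ker_one_sub.mp hy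
        rw [hK, Submodule.mem_iInf]
        intro q
        rw [mem_ker_one_sub]
        have h1 := star_flip hs1 (hq q).1 (hsq q q.2)
        have h2 := congrFun (congrArg DFunLike.coe h1) y
        simp only [mul_apply_eq_comp] at h2
        rw [← hy', ← h2]
      rw [sa_eq_projL hs1 hs2]
      exact projL_comp hle
  · -- supremum
    set X : Submodule ℝ H := ⨆ q : R, (1 - (q : H →L[ℝ] H)).ker with hX
    set K : Submodule ℝ H := X.topologicalClosure with hK
    haveI : CompleteSpace K := X.isClosed_topologicalClosure.completeSpace_coe
    have hXK : ∀ q : R, (1 - (q : H →L[ℝ] H)).ker ≤ K :=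
      fun q => (le_iSup _ q).trans X.le_topologicalClosure
    refine ⟨projL K, ⟨projL_selfAdjoint K, projL_idem K⟩, ?_, ?_, ?_⟩
    · ext x
      have hmem : p (a x) ∈ K := by
        rw [hpa ⟨q0, hq0⟩ x]
        exact hXK _ (sa_apply_mem (hq _).2 (a x))
      have horth : a x - p (a x) ∈ Kᗮ := by
        rw [hK, closure_orth, hX, ← Submodule.iInf_orthogonal, Submodule.mem_iInf]
        intro q
        rw [hpa q x]
        exact sa_sub_mem (hq q).1 (hq q).2 (a x)
      simp only [mul_apply_eq_comp]
      rw [projL_apply]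
      exact (eq_starProjection_of_mem_orthogonal hmem horth).symm
    · intro q hqR
      rw [sa_eq_projL ((hR q hqR).1.1) ((hR q hqR).1.2)]
      exact projL_comp (hXK ⟨q, hqR⟩)
    · intro s hs1 hs2 hsq
      have hle : K ≤ (1 - s).ker := by
        rw [hK]
        refine X.topologicalClosure_minimal ?_ (isClosed_ker _)
        rw [hX]
        refine iSup_le fun q => ?_
        intro y hy
        have hy' : (q : H →L[ℝ] H) y = y := mem_ker_one_sub.mp hy
        rw [mem_ker_one_sub]
        have h1 := star_flip (hq q).1 hs1 (hsq q q.2)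
        have h2 := congrFun (congrArg DFunLike.coe h1) y
        simp only [mul_apply_eq_comp] at h2
        rw [← hy', ← h2]
      rw [sa_eq_projL hs1 hs2]
      exact projL_comp hle
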